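/- (Lemma 1) Suppose two parent particles, each of invariant mass m₀, are produced; for each n ∈ {1,2}, parent n has four-momentum equal to the sum of a visible four-momentum (E_v⁽ⁿ⁾, p_v⁽ⁿ⁾) and an invisible four-momentum (E_i⁽ⁿ⁾, p_i⁽ⁿ⁾), all four daughter four-momenta being causal (E ≥ |p|). Let m_v⁽ⁿ⁾ and vT⁽ⁿ⁾ be the invariant mass and transverse momentum of visible system n, and let pTmiss be the sum of the transverse momenta of the two invisible four-momenta. Then mT2(v₁, v₂, pTmiss, 0, 0) ≤ m₀. -/

import Mathlib

open scoped RealInnerProductSpace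

/-- Transverse energy `e(m,p) = √(m² + |p|²)`. -/
noncomputable def transverseEnergy (m : ℝ) (p : EuclideanSpace ℝ (Fin 2)) : ℝ :=
  Real.sqrt (m ^ 2 + ‖p‖ ^ 2)

/-- Transverse mass `m_T(m_v, vT, m_i, qT)`. -/
noncomputable def transverseMass (mv : ℝ) (vT : EuclideanSpace ℝ (Fin 2))
    (mi : ℝ) (qT : EuclideanSpace ℝ (Fin 2)) : ℝ :=
  Real.sqrt (mv ^ 2 + mi ^ 2 +
    2 * (transverseEnergy mv vT * transverseEnergy mi qT - ⟪vT, qT⟫))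

/-- `mT2(v₁, v₂, pTmiss, m_i⁽¹⁾, m_i⁽²⁾)`: the infimum over all partitions
`qT⁽¹⁾ + qT⁽²⁾ = pTmiss` of the larger of the two transverse masses. -/
noncomputable def mT2 (mv1 : ℝ) (vT1 : EuclideanSpace ℝ (Fin 2))
    (mv2 : ℝ) (vT2 : EuclideanSpace ℝ (Fin 2))
    (ptmiss : EuclideanSpace ℝ (Fin 2)) (mi1 mi2 : ℝ) : ℝ :=
  sInf {r : ℝ | ∃ q1 q2 : EuclideanSpace ℝ (Fin 2), q1 + q2 = ptmiss ∧
    r = max (transverseMass mv1 vT1 mi1 q1) (transverseMass mv2 vT2 mi2 q2)}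

/-- Projection of a 3-momentum onto the transverse plane (first two coordinates). -/
noncomputable def projT (p : EuclideanSpace ℝ (Fin 3)) : EuclideanSpace ℝ (Fin 2) :=
  WithLp.toLp 2 (fun i : Fin 2 => p i.castSucc)

/-- Invariant mass `√(E² − |p|²)` of a 3+1 four-momentum `(E, p)`. -/
noncomputable def invariantMass (E : ℝ) (p : EuclideanSpace ℝ (Fin 3)) : ℝ :=
  Real.sqrt (E ^ 2 - ‖p‖ ^ 2)


lemma inner_split (x y : EuclideanSpace ℝ (Fin 3)) :
    ⟪x, y⟫ = ⟪projT x, projT y⟫ + x 2 * y 2 := by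
  simp [PiLp.inner_apply, projT, Fin.sum_univ_three, Fin.sum_univ_two, RCLike.inner_apply, mul_comm]

lemma norm_sq_split (x : EuclideanSpace ℝ (Fin 3)) :
    ‖x‖ ^ 2 = ‖projT x‖ ^ 2 + (x 2) ^ 2 := by
  have h := inner_split x x
  rw [real_inner_self_eq_norm_sq, real_inner_self_eq_norm_sq] at h
  nlinarith [h]

lemma key_prod (a b x y : ℝ) (ha : 0 ≤ a) (hb : 0 ≤ b)
    (hx : x ^ 2 ≤ a ^ 2) (hy : y ^ 2 ≤ b ^ 2) :
    Real.sqrt (a ^ 2 - x ^ 2) * Real.sqrt (b ^ 2 - y ^ 2) ≤ a * b - x * y := by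
  have h0 : 0 ≤ a * b - x * y := by
    nlinarith [sq_nonneg (a*b - x*y), sq_nonneg (a*b + x*y), mul_nonneg ha hb]
  rw [← Real.sqrt_mul (by linarith)]
  calc Real.sqrt ((a ^ 2 - x ^ 2) * (b ^ 2 - y ^ 2))
      ≤ Real.sqrt ((a * b - x * y) ^ 2) :=
        Real.sqrt_le_sqrt (by nlinarith [sq_nonneg (a*y - b*x)])
    _ = a * b - x * y := Real.sqrt_sq h0

lemma transverseMass_le_invariantMass (a b : ℝ) (pv pinv : EuclideanSpace ℝ (Fin 3))
    (hv : ‖pv‖ ≤ a) (hi : ‖pinv‖ ≤ b) :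
    transverseMass (invariantMass a pv) (projT pv) 0 (projT pinv)
      ≤ invariantMass (a + b) (pv + pinv) := by
  have ha : 0 ≤ a := le_trans (norm_nonneg _) hv
  have hb : 0 ≤ b := le_trans (norm_nonneg _) hi
  have hva : ‖pv‖ ^ 2 ≤ a ^ 2 := by nlinarith [norm_nonneg pv]
  have hib : ‖pinv‖ ^ 2 ≤ b ^ 2 := by nlinarith [norm_nonneg pinv]
  have hsv := norm_sq_split pv
  have hsi := norm_sq_split pinv
  have hmv : (invariantMass a pv) ^ 2 = a ^ 2 - ‖pv‖ ^ 2 :=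
    Real.sq_sqrt (by linarith)
  have hTE : transverseEnergy (invariantMass a pv) (projT pv)
      = Real.sqrt (a ^ 2 - (pv 2) ^ 2) := by
    unfold transverseEnergy
    rw [hmv]
    congr 1
    linarith
  have hTEq : transverseEnergy 0 (projT pinv) = ‖projT pinv‖ := by
    unfold transverseEnergy
    rw [show (0:ℝ) ^ 2 + ‖projT pinv‖ ^ 2 = ‖projT pinv‖ ^ 2 by ring]
    exact Real.sqrt_sq (norm_nonneg _)
  have hqle : ‖projT pinv‖ ≤ Real.sqrt (b ^ 2 - (pinv 2) ^ 2) := by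
    rw [show ‖projT pinv‖ = Real.sqrt (‖projT pinv‖ ^ 2) from
      (Real.sqrt_sq (norm_nonneg _)).symm]
    exact Real.sqrt_le_sqrt (by nlinarith)
  have hkey := key_prod a b (pv 2) (pinv 2) ha hb (by nlinarith) (by nlinarith)
  have hprod : Real.sqrt (a ^ 2 - (pv 2) ^ 2) * ‖projT pinv‖ ≤ a * b - pv 2 * pinv 2 :=
    le_trans (mul_le_mul_of_nonneg_left hqle (Real.sqrt_nonneg _)) hkey
  have hinner := inner_split pv pinv
  have hnadd : ‖pv + pinv‖ ^ 2 = ‖pv‖ ^ 2 + 2 * ⟪pv, pinv⟫ + ‖pinv‖ ^ 2 :=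
    norm_add_sq_real pv pinv
  unfold transverseMass
  rw [hTE, hTEq]
  unfold invariantMass
  apply Real.sqrt_le_sqrt
  have hmv' : Real.sqrt (a ^ 2 - ‖pv‖ ^ 2) ^ 2 = a ^ 2 - ‖pv‖ ^ 2 := hmv
  nlinarith [hmv', hprod]

/-- Lemma 1: for pair production of two parents each of mass `m₀`,
each decaying to a visible and an invisible system,
`mT2(v₁, v₂, pTmiss, 0, 0) ≤ m₀`. -/
theorem mT2_le_parent_mass (m0 : ℝ) (Ev Ei : Fin 2 → ℝ)
    (pv pinv : Fin 2 → EuclideanSpace ℝ (Fin 3))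
    (hv : ∀ n, ‖pv n‖ ≤ Ev n) (hi : ∀ n, ‖pinv n‖ ≤ Ei n)
    (hm : ∀ n, invariantMass (Ev n + Ei n) (pv n + pinv n) = m0) :
    mT2 (invariantMass (Ev 0) (pv 0)) (projT (pv 0))
        (invariantMass (Ev 1) (pv 1)) (projT (pv 1))
        (projT (pinv 0) + projT (pinv 1)) 0 0 ≤ m0 :=  by
  have h0 := transverseMass_le_invariantMass (Ev 0) (Ei 0) (pv 0) (pinv 0) (hv 0) (hi 0)
  have h1 := transverseMass_le_invariantMass (Ev 1) (Ei 1) (pv 1) (pinv 1) (hv 1) (hi 1)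
  rw [hm 0] at h0
  rw [hm 1] at h1
  have hbdd : BddBelow {r : ℝ | ∃ q1 q2 : EuclideanSpace ℝ (Fin 2),
      q1 + q2 = projT (pinv 0) + projT (pinv 1) ∧
      r = max (transverseMass (invariantMass (Ev 0) (pv 0)) (projT (pv 0)) 0 q1)
              (transverseMass (invariantMass (Ev 1) (pv 1)) (projT (pv 1)) 0 q2)} := by
    refine ⟨0, ?_⟩
    rintro r ⟨q1, q2, -, rfl⟩
    exact le_trans (Real.sqrt_nonneg _) (le_max_left _ _)
  have hmem : max (transverseMass (invariantMass (Ev 0) (pv 0)) (projT (pv 0)) 0 (projT (pinv 0)))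
      (transverseMass (invariantMass (Ev 1) (pv 1)) (projT (pv 1)) 0 (projT (pinv 1)))
      ∈ {r : ℝ | ∃ q1 q2 : EuclideanSpace ℝ (Fin 2),
      q1 + q2 = projT (pinv 0) + projT (pinv 1) ∧
      r = max (transverseMass (invariantMass (Ev 0) (pv 0)) (projT (pv 0)) 0 q1)
              (transverseMass (invariantMass (Ev 1) (pv 1)) (projT (pv 1)) 0 q2)} :=
    ⟨projT (pinv 0), projT (pinv 1), rfl, rfl⟩
  exact le_trans (csInf_le hbdd hmem) (max_le h0 h1)
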